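/- Let Ω ⊆ ℝ² be open and let r : Ω → ℝ³ be a C³ immersion whose coordinates are orthogonal, i.e. F = r_u·r_v ≡ 0 on Ω. Set a = |r_u| and b = |r_v| (both positive on Ω). Then the Gaussian curvature of r satisfies the metric curvature formula K = −(1/(a b)) [ ∂_u( (∂_u b)/a ) + ∂_v( (∂_v a)/b ) ] at every point of Ω. -/

import Mathlib

noncomputable section

/-- Euclidean dot product on `ℝ³`. -/
def dot3 (x y : Fin 3 → ℝ) : ℝ := x 0 * y 0 + x 1 * y 1 + x 2 * y 2

/-- Cross product on `ℝ³`. -/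
def cross3 (x y : Fin 3 → ℝ) : Fin 3 → ℝ :=
  ![x 1 * y 2 - x 2 * y 1, x 2 * y 0 - x 0 * y 2, x 0 * y 1 - x 1 * y 0]

/-- Euclidean length on `ℝ³`. -/
def len3 (x : Fin 3 → ℝ) : ℝ := Real.sqrt (dot3 x x)

/-- Partial derivative in the first variable. -/
def du {E : Type*} [NormedAddCommGroup E] [NormedSpace ℝ E]
    (f : ℝ × ℝ → E) (p : ℝ × ℝ) : E := fderiv ℝ f p (1, 0)

/-- Partial derivative in the second variable. -/
def dv {E : Type*} [NormedAddCommGroup E] [NormedSpace ℝ E]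
    (f : ℝ × ℝ → E) (p : ℝ × ℝ) : E := fderiv ℝ f p (0, 1)

/-- First fundamental form coefficient `E = r_u · r_u`. -/
def Icoef₁ (r : ℝ × ℝ → Fin 3 → ℝ) (p : ℝ × ℝ) : ℝ := dot3 (du r p) (du r p)

/-- First fundamental form coefficient `F = r_u · r_v`. -/
def Icoef₂ (r : ℝ × ℝ → Fin 3 → ℝ) (p : ℝ × ℝ) : ℝ := dot3 (du r p) (dv r p)

/-- First fundamental form coefficient `G = r_v · r_v`. -/
def Icoef₃ (r : ℝ × ℝ → Fin 3 → ℝ) (p : ℝ × ℝ) : ℝ := dot3 (dv r p) (dv r p)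

/-- Unit normal `n = (r_u × r_v)/|r_u × r_v|`. -/
def unitNormal (r : ℝ × ℝ → Fin 3 → ℝ) (p : ℝ × ℝ) : Fin 3 → ℝ :=
  (len3 (cross3 (du r p) (dv r p)))⁻¹ • cross3 (du r p) (dv r p)

/-- Second fundamental form coefficient `L = r_uu · n`. -/
def IIcoef₁ (r : ℝ × ℝ → Fin 3 → ℝ) (p : ℝ × ℝ) : ℝ := dot3 (du (du r) p) (unitNormal r p)

/-- Second fundamental form coefficient `M = r_uv · n`. -/
def IIcoef₂ (r : ℝ × ℝ → Fin 3 → ℝ) (p : ℝ × ℝ) : ℝ := dot3 (dv (du r) p) (unitNormal r p)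

/-- Second fundamental form coefficient `N = r_vv · n`. -/
def IIcoef₃ (r : ℝ × ℝ → Fin 3 → ℝ) (p : ℝ × ℝ) : ℝ := dot3 (dv (dv r) p) (unitNormal r p)

/-- Gaussian curvature `K = (LN − M²)/(EG − F²)`. -/
def gaussK (r : ℝ × ℝ → Fin 3 → ℝ) (p : ℝ × ℝ) : ℝ :=
  (IIcoef₁ r p * IIcoef₃ r p - IIcoef₂ r p ^ 2) /
    (Icoef₁ r p * Icoef₃ r p - Icoef₂ r p ^ 2)

/-- Mean curvature `H = (EN − 2FM + GL)/(2(EG − F²))`. -/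
def meanH (r : ℝ × ℝ → Fin 3 → ℝ) (p : ℝ × ℝ) : ℝ :=
  (Icoef₁ r p * IIcoef₃ r p - 2 * Icoef₂ r p * IIcoef₂ r p + Icoef₃ r p * IIcoef₁ r p) /
    (2 * (Icoef₁ r p * Icoef₃ r p - Icoef₂ r p ^ 2))

section Helpers

variable {p : ℝ × ℝ}

lemma dot3_nonneg (x : Fin 3 → ℝ) : 0 ≤ dot3 x x := by
  have h : dot3 x x = x 0 ^ 2 + x 1 ^ 2 + x 2 ^ 2 := by unfold dot3; ring
  rw [h]; positivity

lemma dot3_comm (x y : Fin 3 → ℝ) : dot3 x y = dot3 y x := by unfold dot3; ring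

lemma dot3_ne_zero {x : Fin 3 → ℝ} (hx : x ≠ 0) : dot3 x x ≠ 0 := by
  intro h
  apply hx
  unfold dot3 at h
  have h0 : x 0 = 0 := by nlinarith [sq_nonneg (x 0), sq_nonneg (x 1), sq_nonneg (x 2)]
  have h1 : x 1 = 0 := by nlinarith [sq_nonneg (x 0), sq_nonneg (x 1), sq_nonneg (x 2)]
  have h2 : x 2 = 0 := by nlinarith [sq_nonneg (x 0), sq_nonneg (x 1), sq_nonneg (x 2)]
  funext i
  fin_cases i <;> simpa

lemma len3_pos {x : Fin 3 → ℝ} (hx : x ≠ 0) : 0 < len3 x :=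
  Real.sqrt_pos.mpr (lt_of_le_of_ne (dot3_nonneg x) (Ne.symm (dot3_ne_zero hx)))

lemma len3_nonneg (x : Fin 3 → ℝ) : 0 ≤ len3 x := Real.sqrt_nonneg _

lemma len3_mul_self (x : Fin 3 → ℝ) : len3 x * len3 x = dot3 x x :=
  Real.mul_self_sqrt (dot3_nonneg x)

lemma lagrange3 (x y : Fin 3 → ℝ) :
    dot3 (cross3 x y) (cross3 x y) = dot3 x x * dot3 y y - dot3 x y ^ 2 := by
  simp [dot3, cross3]; ring

lemma gram3 (w z x y : Fin 3 → ℝ) :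
    dot3 w (cross3 x y) * dot3 z (cross3 x y) =
      dot3 w z * (dot3 x x * dot3 y y - dot3 x y ^ 2)
      - dot3 w x * (dot3 z x * dot3 y y - dot3 z y * dot3 x y)
      + dot3 w y * (dot3 z x * dot3 x y - dot3 z y * dot3 x x) := by
  simp [dot3, cross3]; ring

lemma dot3_smul_right (c : ℝ) (x y : Fin 3 → ℝ) : dot3 x (c • y) = c * dot3 x y := by
  simp [dot3, Pi.smul_apply, smul_eq_mul]; ring

lemma cross3_left_ne_zero {x y : Fin 3 → ℝ} (h : cross3 x y ≠ 0) : x ≠ 0 := by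
  rintro rfl
  apply h
  funext i
  fin_cases i <;> simp [cross3]

lemma cross3_right_ne_zero {x y : Fin 3 → ℝ} (h : cross3 x y ≠ 0) : y ≠ 0 := by
  rintro rfl
  apply h
  funext i
  fin_cases i <;> simp [cross3]

-- components
lemma diffAt_pi {f : ℝ × ℝ → Fin 3 → ℝ} (hf : DifferentiableAt ℝ f p) (i : Fin 3) :
    DifferentiableAt ℝ (fun q => f q i) p :=
  ((ContinuousLinearMap.proj i : (Fin 3 → ℝ) →L[ℝ] ℝ).differentiableAt).comp p hf

lemma fd_pi {f : ℝ × ℝ → Fin 3 → ℝ} (hf : DifferentiableAt ℝ f p) (i : Fin 3) (w : ℝ × ℝ) :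
    fderiv ℝ (fun q => f q i) p w = fderiv ℝ f p w i := by
  have h : (fun q => f q i) = (ContinuousLinearMap.proj i : (Fin 3 → ℝ) →L[ℝ] ℝ) ∘ f := rfl
  rw [h, fderiv_comp p ((ContinuousLinearMap.proj i).differentiableAt) hf,
    ContinuousLinearMap.fderiv]
  rfl

lemma cd_pi {n : WithTop ℕ∞} {f : ℝ × ℝ → Fin 3 → ℝ} (hf : ContDiffAt ℝ n f p) (i : Fin 3) :
    ContDiffAt ℝ n (fun q => f q i) p :=
  ((ContinuousLinearMap.proj i : (Fin 3 → ℝ) →L[ℝ] ℝ).contDiff.contDiffAt).comp p hf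

lemma diffAt_dot3 {f g : ℝ × ℝ → Fin 3 → ℝ} (hf : DifferentiableAt ℝ f p)
    (hg : DifferentiableAt ℝ g p) :
    DifferentiableAt ℝ (fun q => dot3 (f q) (g q)) p := by
  unfold dot3
  exact (((diffAt_pi hf 0).mul (diffAt_pi hg 0)).add
    ((diffAt_pi hf 1).mul (diffAt_pi hg 1))).add ((diffAt_pi hf 2).mul (diffAt_pi hg 2))

lemma cd_dot3 {n : WithTop ℕ∞} {f g : ℝ × ℝ → Fin 3 → ℝ} (hf : ContDiffAt ℝ n f p)
    (hg : ContDiffAt ℝ n g p) :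
    ContDiffAt ℝ n (fun q => dot3 (f q) (g q)) p := by
  unfold dot3
  exact (((cd_pi hf 0).mul (cd_pi hg 0)).add
    ((cd_pi hf 1).mul (cd_pi hg 1))).add ((cd_pi hf 2).mul (cd_pi hg 2))

lemma cd_len3 {n : WithTop ℕ∞} {f : ℝ × ℝ → Fin 3 → ℝ} (hf : ContDiffAt ℝ n f p)
    (h0 : f p ≠ 0) : ContDiffAt ℝ n (fun q => len3 (f q)) p := by
  unfold len3
  exact (Real.contDiffAt_sqrt (dot3_ne_zero h0)).comp p (cd_dot3 hf hf)

lemma fd_mul {f g : ℝ × ℝ → ℝ} (hf : DifferentiableAt ℝ f p) (hg : DifferentiableAt ℝ g p)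
    (w : ℝ × ℝ) :
    fderiv ℝ (fun q => f q * g q) p w = fderiv ℝ f p w * g p + f p * fderiv ℝ g p w := by
  rw [fderiv_fun_mul hf hg]
  simp [ContinuousLinearMap.add_apply, ContinuousLinearMap.smul_apply, smul_eq_mul]
  ring

lemma fd_dot3 {f g : ℝ × ℝ → Fin 3 → ℝ} (hf : DifferentiableAt ℝ f p)
    (hg : DifferentiableAt ℝ g p) (w : ℝ × ℝ) :
    fderiv ℝ (fun q => dot3 (f q) (g q)) p w
      = dot3 (fderiv ℝ f p w) (g p) + dot3 (f p) (fderiv ℝ g p w) := by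
  unfold dot3
  rw [fderiv_fun_add (f := fun q => f q 0 * g q 0 + f q 1 * g q 1) (g := fun q => f q 2 * g q 2) (((diffAt_pi hf 0).mul (diffAt_pi hg 0)).add
    ((diffAt_pi hf 1).mul (diffAt_pi hg 1))) ((diffAt_pi hf 2).mul (diffAt_pi hg 2)),
    fderiv_fun_add (f := fun q => f q 0 * g q 0) (g := fun q => f q 1 * g q 1) ((diffAt_pi hf 0).mul (diffAt_pi hg 0)) ((diffAt_pi hf 1).mul (diffAt_pi hg 1))]
  simp only [ContinuousLinearMap.add_apply]
  rw [fd_mul (diffAt_pi hf 0) (diffAt_pi hg 0) w, fd_mul (diffAt_pi hf 1) (diffAt_pi hg 1) w,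
    fd_mul (diffAt_pi hf 2) (diffAt_pi hg 2) w]
  simp only [fd_pi hf, fd_pi hg]
  ring

lemma fd_len3 {f : ℝ × ℝ → Fin 3 → ℝ} (hf : DifferentiableAt ℝ f p) (h0 : f p ≠ 0)
    (w : ℝ × ℝ) :
    fderiv ℝ (fun q => len3 (f q)) p w
      = dot3 (f p) (fderiv ℝ f p w) / len3 (f p) := by
  unfold len3
  have hs : HasDerivAt Real.sqrt (1 / (2 * Real.sqrt (dot3 (f p) (f p)))) (dot3 (f p) (f p)) :=
    Real.hasDerivAt_sqrt (dot3_ne_zero h0)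
  have hd : HasFDerivAt (fun q => dot3 (f q) (f q))
      (fderiv ℝ (fun q => dot3 (f q) (f q)) p) p := (diffAt_dot3 hf hf).hasFDerivAt
  have hc := hs.comp_hasFDerivAt p hd
  have heq : (fun q => Real.sqrt (dot3 (f q) (f q))) = Real.sqrt ∘ (fun q => dot3 (f q) (f q)) := rfl
  rw [heq, hc.fderiv]
  simp only [ContinuousLinearMap.smul_apply, smul_eq_mul]
  rw [fd_dot3 hf hf w, dot3_comm (fderiv ℝ f p w) (f p)]
  have hsp : Real.sqrt (dot3 (f p) (f p)) ≠ 0 :=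
    ne_of_gt (Real.sqrt_pos.mpr (lt_of_le_of_ne (dot3_nonneg _) (Ne.symm (dot3_ne_zero h0))))
  field_simp
  ring

lemma fd_inv {g : ℝ × ℝ → ℝ} (hg : DifferentiableAt ℝ g p) (h0 : g p ≠ 0) (w : ℝ × ℝ) :
    fderiv ℝ (fun q => (g q)⁻¹) p w = -(fderiv ℝ g p w) / (g p) ^ 2 := by
  have hc := (hasDerivAt_inv h0).comp_hasFDerivAt p hg.hasFDerivAt
  have heq : (fun q => (g q)⁻¹) = (fun y => y⁻¹) ∘ g := rfl
  rw [heq, hc.fderiv]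
  simp only [ContinuousLinearMap.smul_apply, smul_eq_mul]
  field_simp

lemma fd_div {f g : ℝ × ℝ → ℝ} (hf : DifferentiableAt ℝ f p) (hg : DifferentiableAt ℝ g p)
    (h0 : g p ≠ 0) (w : ℝ × ℝ) :
    fderiv ℝ (fun q => f q / g q) p w
      = (fderiv ℝ f p w * g p - f p * fderiv ℝ g p w) / (g p) ^ 2 := by
  simp only [div_eq_mul_inv]
  rw [fd_mul (g := fun q => (g q)⁻¹) hf (hg.inv h0) w, fd_inv hg h0 w]
  field_simp
  ring

lemma fd_neg {f : ℝ × ℝ → ℝ} (w : ℝ × ℝ) :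
    fderiv ℝ (fun q => -(f q)) p w = -(fderiv ℝ f p w) := by
  rw [fderiv_fun_neg]; simp

lemma cd_du {E : Type*} [NormedAddCommGroup E] [NormedSpace ℝ E] {f : ℝ × ℝ → E}
    {m n : WithTop ℕ∞} (hf : ContDiffAt ℝ n f p) (h : m + 1 ≤ n) :
    ContDiffAt ℝ m (du f) p :=
  (hf.fderiv_right h).clm_apply contDiffAt_const

lemma cd_dv {E : Type*} [NormedAddCommGroup E] [NormedSpace ℝ E] {f : ℝ × ℝ → E}
    {m n : WithTop ℕ∞} (hf : ContDiffAt ℝ n f p) (h : m + 1 ≤ n) :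
    ContDiffAt ℝ m (dv f) p :=
  (hf.fderiv_right h).clm_apply contDiffAt_const

lemma duv_comm {E : Type*} [NormedAddCommGroup E] [NormedSpace ℝ E] {f : ℝ × ℝ → E}
    (hf : ContDiffAt ℝ 2 f p) : du (dv f) p = dv (du f) p := by
  have h1 : ContDiffAt ℝ 1 (fderiv ℝ f) p := hf.fderiv_right (by norm_num)
  have hd : DifferentiableAt ℝ (fderiv ℝ f) p := h1.differentiableAt (by norm_num)
  have h1 : du (dv f) p = fderiv ℝ (fderiv ℝ f) p (1, 0) (0, 1) := by
    unfold du dv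
    rw [fderiv_clm_apply hd (differentiableAt_const _)]
    simp
  have h2 : dv (du f) p = fderiv ℝ (fderiv ℝ f) p (0, 1) (1, 0) := by
    unfold du dv
    rw [fderiv_clm_apply hd (differentiableAt_const _)]
    simp
  rw [h1, h2, hf.isSymmSndFDerivAt (by simp [minSmoothness_of_isRCLikeNormedField]) (1, 0) (0, 1)]

lemma du_congr {E : Type*} [NormedAddCommGroup E] [NormedSpace ℝ E] {f g : ℝ × ℝ → E}
    (h : f =ᶠ[nhds p] g) : du f p = du g p := by
  unfold du; rw [h.fderiv_eq]

lemma dv_congr {E : Type*} [NormedAddCommGroup E] [NormedSpace ℝ E] {f g : ℝ × ℝ → E}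
    (h : f =ᶠ[nhds p] g) : dv f p = dv g p := by
  unfold dv; rw [h.fderiv_eq]

end Helpers

/-- **Metric curvature formula in orthogonal coordinates** (Appendix A):
for a `C³` immersion with orthogonal coordinates, writing `a = |r_u|`, `b = |r_v|`,
the Gaussian curvature is
`K = −(1/(ab)) [ ∂_u((∂_u b)/a) + ∂_v((∂_v a)/b) ]`. -/
theorem metric_curvature_formula
    (Ω : Set (ℝ × ℝ)) (hΩ : IsOpen Ω)
    (r : ℝ × ℝ → Fin 3 → ℝ)
    (hr : ContDiffOn ℝ 3 r Ω)
    (himm : ∀ p ∈ Ω, cross3 (du r p) (dv r p) ≠ 0)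
    (horth : ∀ p ∈ Ω, dot3 (du r p) (dv r p) = 0) :
    ∀ p ∈ Ω,
      gaussK r p =
        -(1 / (len3 (du r p) * len3 (dv r p))) *
          (du (fun q => du (fun q' => len3 (dv r q')) q / len3 (du r q)) p +
           dv (fun q => dv (fun q' => len3 (du r q')) q / len3 (dv r q)) p) := by
  intro p hp
  have h12 : ((1 : WithTop ℕ∞) + 1 ≤ 2) := by norm_num
  have h23 : ((2 : WithTop ℕ∞) + 1 ≤ 3) := by norm_num
  have hle12 : ((1 : WithTop ℕ∞) ≤ 2) := by norm_num
  have hC3 : ∀ q ∈ Ω, ContDiffAt ℝ 3 r q := fun q hq => hr.contDiffAt (hΩ.mem_nhds hq)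
  have hru2 : ∀ q ∈ Ω, ContDiffAt ℝ 2 (du r) q := fun q hq => cd_du (hC3 q hq) h23
  have hrv2 : ∀ q ∈ Ω, ContDiffAt ℝ 2 (dv r) q := fun q hq => cd_dv (hC3 q hq) h23
  have hruD : ∀ q ∈ Ω, DifferentiableAt ℝ (du r) q :=
    fun q hq => (hru2 q hq).differentiableAt (by norm_num)
  have hrvD : ∀ q ∈ Ω, DifferentiableAt ℝ (dv r) q :=
    fun q hq => (hrv2 q hq).differentiableAt (by norm_num)
  have hruuD : ∀ q ∈ Ω, DifferentiableAt ℝ (du (du r)) q :=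
    fun q hq => (cd_du (hru2 q hq) h12).differentiableAt (by norm_num)
  have hruvD : ∀ q ∈ Ω, DifferentiableAt ℝ (dv (du r)) q :=
    fun q hq => (cd_dv (hru2 q hq) h12).differentiableAt (by norm_num)
  have hU0 : ∀ q ∈ Ω, du r q ≠ 0 := fun q hq => cross3_left_ne_zero (himm q hq)
  have hV0 : ∀ q ∈ Ω, dv r q ≠ 0 := fun q hq => cross3_right_ne_zero (himm q hq)
  have hA0 : ∀ q ∈ Ω, len3 (du r q) ≠ 0 := fun q hq => ne_of_gt (len3_pos (hU0 q hq))
  have hB0 : ∀ q ∈ Ω, len3 (dv r q) ≠ 0 := fun q hq => ne_of_gt (len3_pos (hV0 q hq))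
  have ha2 : ∀ q ∈ Ω, ContDiffAt ℝ 2 (fun q' => len3 (du r q')) q :=
    fun q hq => cd_len3 (hru2 q hq) (hU0 q hq)
  have hb2 : ∀ q ∈ Ω, ContDiffAt ℝ 2 (fun q' => len3 (dv r q')) q :=
    fun q hq => cd_len3 (hrv2 q hq) (hV0 q hq)
  have haD : ∀ q ∈ Ω, DifferentiableAt ℝ (fun q' => len3 (du r q')) q :=
    fun q hq => (ha2 q hq).differentiableAt (by norm_num)
  have hbD : ∀ q ∈ Ω, DifferentiableAt ℝ (fun q' => len3 (dv r q')) q :=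
    fun q hq => (hb2 q hq).differentiableAt (by norm_num)
  have hmix : ∀ q ∈ Ω, du (dv r) q = dv (du r) q :=
    fun q hq => duv_comm ((hC3 q hq).of_le (by norm_num : (2 : WithTop ℕ∞) ≤ 3))
  have hAuF : ∀ q ∈ Ω, ∀ w, fderiv ℝ (fun q' => len3 (du r q')) q w
      = dot3 (du r q) (fderiv ℝ (du r) q w) / len3 (du r q) :=
    fun q hq w => fd_len3 (hruD q hq) (hU0 q hq) w
  have hBuF : ∀ q ∈ Ω, ∀ w, fderiv ℝ (fun q' => len3 (dv r q')) q w
      = dot3 (dv r q) (fderiv ℝ (dv r) q w) / len3 (dv r q) :=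
    fun q hq w => fd_len3 (hrvD q hq) (hV0 q hq) w
  have horthd : ∀ q ∈ Ω, ∀ w,
      dot3 (fderiv ℝ (du r) q w) (dv r q) + dot3 (du r q) (fderiv ℝ (dv r) q w) = 0 := by
    intro q hq w
    have hev : (fun q' => dot3 (du r q') (dv r q')) =ᶠ[nhds q] (fun _ => (0 : ℝ)) := by
      filter_upwards [hΩ.mem_nhds hq] with x hx using horth x hx
    have h0 : fderiv ℝ (fun q' => dot3 (du r q') (dv r q')) q w = 0 := by
      rw [hev.fderiv_eq]; simp
    rw [fd_dot3 (hruD q hq) (hrvD q hq) w] at h0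
    exact h0
  -- F2 : r_uv · r_v = b · b_u  on Ω
  have F2 : ∀ q ∈ Ω, dot3 (dv (du r) q) (dv r q)
      = len3 (dv r q) * du (fun q' => len3 (dv r q')) q := by
    intro q hq
    have h0' : du (fun q' => len3 (dv r q')) q
        = dot3 (dv r q) (du (dv r) q) / len3 (dv r q) := hBuF q hq (1, 0)
    rw [hmix q hq] at h0'
    rw [h0', dot3_comm (dv (du r) q) (dv r q)]
    field_simp [hB0 q hq]
  -- F1 : r_uu · r_v = -(a · a_v)  on Ω
  have F1 : ∀ q ∈ Ω, dot3 (du (du r) q) (dv r q)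
      = -(len3 (du r q) * dv (fun q' => len3 (du r q')) q) := by
    intro q hq
    have h0' : dv (fun q' => len3 (du r q')) q
        = dot3 (du r q) (dv (du r) q) / len3 (du r q) := hAuF q hq (0, 1)
    have h2 : dot3 (du (du r) q) (dv r q) + dot3 (du r q) (du (dv r) q) = 0 :=
      horthd q hq (1, 0)
    rw [hmix q hq] at h2
    rw [h0']
    have hc : len3 (du r q) * (dot3 (du r q) (dv (du r) q) / len3 (du r q))
        = dot3 (du r q) (dv (du r) q) := by field_simp [hA0 q hq]
    rw [hc]
    linarith [h2]
  -- scalar second-fundamental tangential components at p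
  have sAu : du (fun q => len3 (du r q)) p
      = dot3 (du r p) (du (du r) p) / len3 (du r p) := hAuF p hp (1, 0)
  have sAv : dv (fun q => len3 (du r q)) p
      = dot3 (du r p) (dv (du r) p) / len3 (du r p) := hAuF p hp (0, 1)
  have sBv : dv (fun q => len3 (dv r q)) p
      = dot3 (dv r p) (dv (dv r) p) / len3 (dv r p) := hBuF p hp (0, 1)
  have sPuuU : dot3 (du (du r) p) (du r p) = len3 (du r p) * (du (fun q => len3 (du r q)) p) := by
    rw [sAu, dot3_comm (du (du r) p) (du r p)]
    field_simp [hA0 p hp]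
  have sPuvU : dot3 (dv (du r) p) (du r p) = len3 (du r p) * (dv (fun q => len3 (du r q)) p) := by
    rw [sAv, dot3_comm (dv (du r) p) (du r p)]
    field_simp [hA0 p hp]
  have sPuvV : dot3 (dv (du r) p) (dv r p) = len3 (dv r p) * (du (fun q => len3 (dv r q)) p) := F2 p hp
  have sPvvV : dot3 (dv (dv r) p) (dv r p) = len3 (dv r p) * (dv (fun q => len3 (dv r q)) p) := by
    rw [sBv, dot3_comm (dv (dv r) p) (dv r p)]
    field_simp [hB0 p hp]
  have sPuuV : dot3 (du (du r) p) (dv r p) = -(len3 (du r p) * (dv (fun q => len3 (du r q)) p)) := F1 p hp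
  have sPvvU : dot3 (dv (dv r) p) (du r p) = -(len3 (dv r p) * (du (fun q => len3 (dv r q)) p)) := by
    have h2 : dot3 (dv (du r) p) (dv r p) + dot3 (du r p) (dv (dv r) p) = 0 :=
      horthd p hp (0, 1)
    rw [dot3_comm (dv (dv r) p) (du r p)]
    linarith [h2, sPuvV]
  -- third derivative step
  have hev1 : (fun q => dot3 (du (du r) q) (dv r q))
      =ᶠ[nhds p] (fun q => -(len3 (du r q) * dv (fun q' => len3 (du r q')) q)) := by
    filter_upwards [hΩ.mem_nhds hp] with x hx using F1 x hx
  have hev2 : (fun q => dot3 (dv (du r) q) (dv r q))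
      =ᶠ[nhds p] (fun q => len3 (dv r q) * du (fun q' => len3 (dv r q')) q) := by
    filter_upwards [hΩ.mem_nhds hp] with x hx using F2 x hx
  have k1a : dv (fun q => dot3 (du (du r) q) (dv r q)) p
      = dot3 (dv (du (du r)) p) (dv r p) + dot3 (du (du r) p) (dv (dv r) p) :=
    fd_dot3 (f := du (du r)) (g := dv r) (hruuD p hp) (hrvD p hp) (0, 1)
  have hgA : DifferentiableAt ℝ (fun q => dv (fun q' => len3 (du r q')) q) p :=
    (cd_dv (ha2 p hp) h12).differentiableAt (by norm_num)
  have hgB : DifferentiableAt ℝ (fun q => du (fun q' => len3 (dv r q')) q) p :=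
    (cd_du (hb2 p hp) h12).differentiableAt (by norm_num)
  have k1b : dv (fun q => -(len3 (du r q) * dv (fun q' => len3 (du r q')) q)) p
      = -((dv (fun q => len3 (du r q)) p) * (dv (fun q => len3 (du r q)) p) + len3 (du r p) * (dv (fun q => dv (fun q' => len3 (du r q')) q) p)) := by
    have hthis := fd_neg (f := fun q => len3 (du r q) * dv (fun q' => len3 (du r q')) q)
      (p := p) (0, 1)
    rw [fd_mul (haD p hp) hgA (0, 1)] at hthis
    exact hthis
  have k1 : dot3 (dv (du (du r)) p) (dv r p) + dot3 (du (du r) p) (dv (dv r) p)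
      = -((dv (fun q => len3 (du r q)) p) * (dv (fun q => len3 (du r q)) p) + len3 (du r p) * (dv (fun q => dv (fun q' => len3 (du r q')) q) p)) :=
    (k1a.symm.trans (dv_congr hev1)).trans k1b
  have k2a : du (fun q => dot3 (dv (du r) q) (dv r q)) p
      = dot3 (du (dv (du r)) p) (dv r p) + dot3 (dv (du r) p) (du (dv r) p) :=
    fd_dot3 (f := dv (du r)) (g := dv r) (hruvD p hp) (hrvD p hp) (1, 0)
  rw [hmix p hp] at k2a
  have k2b : du (fun q => len3 (dv r q) * du (fun q' => len3 (dv r q')) q) p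
      = (du (fun q => len3 (dv r q)) p) * (du (fun q => len3 (dv r q)) p) + len3 (dv r p) * (du (fun q => du (fun q' => len3 (dv r q')) q) p) := by
    have hthis := fd_mul (hbD p hp) hgB (1, 0)
    exact hthis
  have k2 : dot3 (du (dv (du r)) p) (dv r p) + dot3 (dv (du r) p) (dv (du r) p)
      = (du (fun q => len3 (dv r q)) p) * (du (fun q => len3 (dv r q)) p) + len3 (dv r p) * (du (fun q => du (fun q' => len3 (dv r q')) q) p) :=
    (k2a.symm.trans (du_congr hev2)).trans k2b
  have ksym : du (dv (du r)) p = dv (du (du r)) p := duv_comm (hru2 p hp)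
  rw [ksym] at k2
  have hK4 : dot3 (dv (du r) p) (dv (du r) p) = dot3 (du (du r) p) (dv (dv r) p)
      + ((dv (fun q => len3 (du r q)) p) * (dv (fun q => len3 (du r q)) p) + len3 (du r p) * (dv (fun q => dv (fun q' => len3 (du r q')) q) p)) + ((du (fun q => len3 (dv r q)) p) * (du (fun q => len3 (dv r q)) p) + len3 (dv r p) * (du (fun q => du (fun q' => len3 (dv r q')) q) p)) := by
    linarith [k1, k2]
  -- length of cross product
  have hcl : len3 (cross3 (du r p) (dv r p)) = len3 (du r p) * len3 (dv r p) := by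
    have h1 : dot3 (cross3 (du r p) (dv r p)) (cross3 (du r p) (dv r p)) = (len3 (du r p) * len3 (dv r p)) ^ 2 := by
      rw [lagrange3, horth p hp, ← len3_mul_self (du r p), ← len3_mul_self (dv r p)]
      ring
    rw [show len3 (cross3 (du r p) (dv r p)) = Real.sqrt (dot3 (cross3 (du r p) (dv r p)) (cross3 (du r p) (dv r p))) from rfl, h1,
      Real.sqrt_sq (mul_nonneg (len3_nonneg _) (len3_nonneg _))]
  -- fundamental form coefficients
  have hI1 : Icoef₁ r p = len3 (du r p) * len3 (du r p) := (len3_mul_self (du r p)).symm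
  have hI2 : Icoef₂ r p = 0 := horth p hp
  have hI3 : Icoef₃ r p = len3 (dv r p) * len3 (dv r p) := (len3_mul_self (dv r p)).symm
  have hII1 : IIcoef₁ r p = (dot3 (du (du r) p) (cross3 (du r p) (dv r p))) / (len3 (du r p) * len3 (dv r p)) := by
    simp only [IIcoef₁, unitNormal]
    rw [hcl, dot3_smul_right, inv_mul_eq_div]
  have hII2 : IIcoef₂ r p = (dot3 (dv (du r) p) (cross3 (du r p) (dv r p))) / (len3 (du r p) * len3 (dv r p)) := by
    simp only [IIcoef₂, unitNormal]
    rw [hcl, dot3_smul_right, inv_mul_eq_div]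
  have hII3 : IIcoef₃ r p = (dot3 (dv (dv r) p) (cross3 (du r p) (dv r p))) / (len3 (du r p) * len3 (dv r p)) := by
    simp only [IIcoef₃, unitNormal]
    rw [hcl, dot3_smul_right, inv_mul_eq_div]
  -- Gram determinant expansions
  have e1 : (dot3 (du (du r) p) (cross3 (du r p) (dv r p))) * (dot3 (dv (dv r) p) (cross3 (du r p) (dv r p))) = len3 (du r p) * len3 (du r p) * (len3 (dv r p) * len3 (dv r p)) * (dot3 (du (du r) p) (dv (dv r) p)) + len3 (du r p) * (len3 (dv r p) * (len3 (dv r p) * len3 (dv r p))) * ((du (fun q => len3 (du r q)) p) * (du (fun q => len3 (dv r q)) p)) + len3 (du r p) * (len3 (du r p) * (len3 (du r p) * len3 (dv r p))) * ((dv (fun q => len3 (du r q)) p) * (dv (fun q => len3 (dv r q)) p)) := by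
    rw [gram3, sPuuU, sPuuV, sPvvU, sPvvV, horth p hp,
      ← len3_mul_self (du r p), ← len3_mul_self (dv r p)]
    ring
  have e2 : (dot3 (dv (du r) p) (cross3 (du r p) (dv r p))) * (dot3 (dv (du r) p) (cross3 (du r p) (dv r p))) = len3 (du r p) * len3 (du r p) * (len3 (dv r p) * len3 (dv r p)) * (dot3 (dv (du r) p) (dv (du r) p)) - len3 (du r p) * len3 (du r p) * (len3 (dv r p) * len3 (dv r p)) * ((dv (fun q => len3 (du r q)) p) * (dv (fun q => len3 (du r q)) p)) - len3 (du r p) * len3 (du r p) * (len3 (dv r p) * len3 (dv r p)) * ((du (fun q => len3 (dv r q)) p) * (du (fun q => len3 (dv r q)) p)) := by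
    rw [gram3, sPuvU, sPuvV, horth p hp,
      ← len3_mul_self (du r p), ← len3_mul_self (dv r p)]
    ring
  have hprod : IIcoef₁ r p * IIcoef₃ r p - IIcoef₂ r p ^ 2
      = ((len3 (du r p) * len3 (du r p) * (len3 (dv r p) * len3 (dv r p)) * (dot3 (du (du r) p) (dv (dv r) p)) + len3 (du r p) * (len3 (dv r p) * (len3 (dv r p) * len3 (dv r p))) * ((du (fun q => len3 (du r q)) p) * (du (fun q => len3 (dv r q)) p)) + len3 (du r p) * (len3 (du r p) * (len3 (du r p) * len3 (dv r p))) * ((dv (fun q => len3 (du r q)) p) * (dv (fun q => len3 (dv r q)) p))) - (len3 (du r p) * len3 (du r p) * (len3 (dv r p) * len3 (dv r p)) * (dot3 (dv (du r) p) (dv (du r) p)) - len3 (du r p) * len3 (du r p) * (len3 (dv r p) * len3 (dv r p)) * ((dv (fun q => len3 (du r q)) p) * (dv (fun q => len3 (du r q)) p)) - len3 (du r p) * len3 (du r p) * (len3 (dv r p) * len3 (dv r p)) * ((du (fun q => len3 (dv r q)) p) * (du (fun q => len3 (dv r q)) p)))) / ((len3 (du r p) * len3 (dv r p)) * (len3 (du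 r p) * len3 (dv r p))) := by
    rw [hII1, hII2, hII3, ← e1, ← e2]
    ring
  -- right-hand side derivative computations
  have hR1 : du (fun q => du (fun q' => len3 (dv r q')) q / len3 (du r q)) p
      = ((du (fun q => du (fun q' => len3 (dv r q')) q) p) * len3 (du r p) - (du (fun q => len3 (dv r q)) p) * (du (fun q => len3 (du r q)) p)) / len3 (du r p) ^ 2 :=
    fd_div hgB (haD p hp) (hA0 p hp) (1, 0)
  have hR2 : dv (fun q => dv (fun q' => len3 (du r q')) q / len3 (dv r q)) p
      = ((dv (fun q => dv (fun q' => len3 (du r q')) q) p) * len3 (dv r p) - (dv (fun q => len3 (du r q)) p) * (dv (fun q => len3 (dv r q)) p)) / len3 (dv r p) ^ 2 :=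
    fd_div hgA (hbD p hp) (hB0 p hp) (0, 1)
  have hA0p := hA0 p hp
  have hB0p := hB0 p hp
  simp only [gaussK]
  rw [hprod, hI1, hI2, hI3, hR1, hR2, hK4]
  field_simp
  ring
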